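/- For coprime positive integers a and b, the classical Dedekind sums satisfy the reciprocity law s(a;b) + s(b;a) = -1/4 + (a² + b² + 1)/(12ab). -/

import Mathlib

open Finset Real

section DedekindAux

lemma cot_c (x : ℝ) (h : Complex.exp (2 * Complex.I * x) ≠ 1) :
    (Real.cot x : ℂ) = Complex.I + 2 * Complex.I / (Complex.exp (2 * Complex.I * x) - 1) := by
  rw [Complex.ofReal_cot, Complex.cot_eq_exp_ratio]
  have h1 : Complex.exp (2 * Complex.I * x) - 1 ≠ 0 := sub_ne_zero.mpr h
  have h2 : Complex.I * (1 - Complex.exp (2 * Complex.I * x)) ≠ 0 :=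
    mul_ne_zero Complex.I_ne_zero (sub_ne_zero.mpr (Ne.symm h))
  field_simp
  rw [show (2:ℂ) * Complex.I * x = Complex.I * x * 2 by ring] at h1 h2 ⊢
  ring_nf
  rw [Complex.I_sq]
  ring

lemma sin_ne_zero_of_not_dvd (p q : ℕ) (hq : 0 < q) (h : ¬ (q ∣ p)) :
    Real.sin (π * p / q) ≠ 0 := by
  intro h0
  rw [Real.sin_eq_zero_iff] at h0
  obtain ⟨k, hk⟩ := h0
  have hq' : (q:ℝ) ≠ 0 := Nat.cast_ne_zero.mpr hq.ne'
  have hπ := Real.pi_ne_zero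
  have hr : (k:ℝ) * q = p := by
    field_simp at hk
    linarith [hk]
  have hkq : (k * q : ℤ) = p := by exact_mod_cast hr
  apply h
  have : (q:ℤ) ∣ (p:ℤ) := ⟨k, by rw [← hkq]; ring⟩
  exact_mod_cast this

lemma cot_three (x y : ℝ) (hx : Real.sin x ≠ 0) (hy : Real.sin y ≠ 0)
    (hxy : Real.sin (x + y) ≠ 0) :
    Real.cot x * Real.cot y - Real.cot (x + y) * Real.cot x
      - Real.cot (x + y) * Real.cot y = 1 := by
  rw [Real.cot_eq_cos_div_sin, Real.cot_eq_cos_div_sin, Real.cot_eq_cos_div_sin]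
  field_simp
  rw [Real.sin_add, Real.cos_add]
  ring

lemma cot_sum_zero (n : ℕ) : ∑ k ∈ Finset.Ico 1 n, Real.cot (π * k / n) = 0 := by
  rcases Nat.eq_zero_or_pos n with h | h
  · simp [h]
  apply Finset.sum_involution (fun k _ => n - k)
  · intro k hk
    simp only [Finset.mem_Ico] at hk
    have h1 : (π * ↑(n - k) / n) = π - π * k / n := by
      have hc : (↑(n - k) : ℝ) = n - k := by
        push_cast [Nat.cast_sub hk.2.le]; ring
      have hn : (n:ℝ) ≠ 0 := by positivity
      rw [hc]; field_simp
    rw [h1, Real.cot_eq_cos_div_sin, Real.cot_eq_cos_div_sin, Real.sin_pi_sub, Real.cos_pi_sub]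
    ring
  · intro k hk hc
    simp only [Finset.mem_Ico] at hk
    intro heq
    apply hc
    have hn : n = 2 * k := by omega
    have hk0 : (k:ℝ) ≠ 0 := by
      have : 0 < k := hk.1
      positivity
    have harg : π * k / n = π / 2 := by
      rw [hn]; push_cast; field_simp
    rw [harg]
    simp [Real.cot_eq_cos_div_sin]
  · intro k hk; simp only [Finset.mem_Ico] at hk ⊢; omega
  · intro k hk; simp only [Finset.mem_Ico] at hk; omega

lemma key_sum (n : ℕ) (z ζ : ℂ) (hζ : ∀ m : ℕ, 0 < m → m < n → ζ ^ m ≠ 1)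
    (hζn : ζ ^ n = 1) (h : z ^ n ≠ 1) :
    ∑ j ∈ Finset.range n, 1 / (z * ζ ^ j - 1) = n / (z ^ n - 1) := by
  have hzn : z ^ n - 1 ≠ 0 := sub_ne_zero.mpr h
  have hterm : ∀ j ∈ Finset.range n,
      1 / (z * ζ ^ j - 1) = (∑ m ∈ Finset.range n, (z * ζ ^ j) ^ m) / (z ^ n - 1) := by
    intro j hj
    have hw : (z * ζ ^ j) ^ n = z ^ n := by
      rw [mul_pow, ← pow_mul, mul_comm j n, pow_mul, hζn, one_pow, mul_one]
    have hw1 : z * ζ ^ j - 1 ≠ 0 := by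
      intro hc
      apply h
      rw [← hw]
      rw [sub_eq_zero] at hc
      rw [hc, one_pow]
    rw [div_eq_div_iff hw1 hzn, one_mul, ← hw, ← geom_sum_mul, mul_comm]
  rw [Finset.sum_congr rfl hterm, ← Finset.sum_div]
  congr 1
  rw [Finset.sum_comm]
  have : ∀ m ∈ Finset.range n, ∑ j ∈ Finset.range n, (z * ζ ^ j) ^ m
      = if m = 0 then (n : ℂ) else 0 := by
    intro m hm
    simp only [Finset.mem_range] at hm
    rcases Nat.eq_zero_or_pos m with h0 | h0
    · simp [h0]
    · rw [if_neg h0.ne']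
      have : ∀ j ∈ Finset.range n, (z * ζ ^ j) ^ m = z ^ m * (ζ ^ m) ^ j := by
        intro j _; rw [mul_pow, ← pow_mul, ← pow_mul, mul_comm j m]
      rw [Finset.sum_congr rfl this, ← Finset.mul_sum]
      have hne : ζ ^ m ≠ 1 := hζ m h0 hm
      rw [geom_sum_eq hne]
      rw [← pow_mul, mul_comm m n, pow_mul, hζn, one_pow, sub_self, zero_div, mul_zero]
  rw [Finset.sum_congr rfl this]
  simp only [Finset.sum_ite_eq', Finset.mem_range]
  have hn0 : n ≠ 0 := by
    intro h0
    exact h (by simp [h0])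
  simp [Nat.pos_of_ne_zero hn0]

lemma exp_ne_one_of_sin (x : ℝ) (h : Real.sin x ≠ 0) :
    Complex.exp (2 * Complex.I * x) ≠ 1 := by
  intro he
  rw [Complex.exp_eq_one_iff] at he
  obtain ⟨k, hk⟩ := he
  apply h
  have hI : (2 : ℂ) * Complex.I ≠ 0 := mul_ne_zero two_ne_zero Complex.I_ne_zero
  have hx : (x : ℂ) = ((k * π : ℝ) : ℂ) := by
    push_cast
    have : (2:ℂ) * Complex.I * x = 2 * Complex.I * (k * π) := by rw [hk]; ring
    exact mul_left_cancel₀ hI this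
  have : x = k * π := Complex.ofReal_inj.mp hx
  rw [this]
  exact Real.sin_int_mul_pi k

lemma zeta_pow_n (n : ℕ) (hn : 0 < n) : Complex.exp (2 * π * Complex.I / n) ^ n = 1 := by
  rw [← Complex.exp_nat_mul]
  have hn' : (n : ℂ) ≠ 0 := Nat.cast_ne_zero.mpr hn.ne'
  rw [show (n : ℂ) * (2 * π * Complex.I / n) = 2 * π * Complex.I by field_simp]
  exact Complex.exp_two_pi_mul_I

lemma zeta_pow_ne_one (n : ℕ) (hn : 0 < n) (m : ℕ) (h1 : 0 < m) (h2 : m < n) :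
    Complex.exp (2 * π * Complex.I / n) ^ m ≠ 1 := by
  rw [← Complex.exp_nat_mul]
  intro he
  rw [Complex.exp_eq_one_iff] at he
  obtain ⟨k, hk⟩ := he
  have hn' : (n : ℂ) ≠ 0 := Nat.cast_ne_zero.mpr hn.ne'
  have hπ : (π : ℂ) ≠ 0 := by
    simp [Complex.ofReal_ne_zero, Real.pi_ne_zero]
  have h2I : (2:ℂ) * π * Complex.I ≠ 0 := by
    apply mul_ne_zero (mul_ne_zero two_ne_zero hπ) Complex.I_ne_zero
  have hmk : (m : ℂ) = k * n := by
    field_simp at hk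
    have : (m : ℂ) * (2 * π * Complex.I) = (k * n) * (2 * π * Complex.I) := by
      rw [hk]; ring
    exact mul_right_cancel₀ h2I this
  have hmk' : (m : ℤ) = k * n := by exact_mod_cast hmk
  have hdvd : (n : ℤ) ∣ m := ⟨k, by rw [hmk']; ring⟩
  have := Int.le_of_dvd (by exact_mod_cast h1) hdvd
  omega

lemma cot_mul_sum (a : ℕ) (ha : 0 < a) (θ : ℝ) (h : Real.sin (a * θ) ≠ 0) :
    ∑ j ∈ Finset.range a, Real.cot (θ + π * j / a) = a * Real.cot (a * θ) := by
  have haC : (a : ℂ) ≠ 0 := Nat.cast_ne_zero.mpr ha.ne'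
  apply Complex.ofReal_inj.mp
  rw [Complex.ofReal_sum]
  have hza : Complex.exp (2 * Complex.I * ((a * θ : ℝ) : ℂ))
      = Complex.exp (2 * Complex.I * (θ:ℂ)) ^ a := by
    rw [← Complex.exp_nat_mul]
    congr 1
    push_cast
    ring
  have hzan : Complex.exp (2 * Complex.I * (θ:ℂ)) ^ a ≠ 1 := by
    rw [← hza]
    exact exp_ne_one_of_sin _ h
  have hexpj : ∀ j : ℕ, Complex.exp (2 * Complex.I * ((θ + π * j / a : ℝ) : ℂ))
      = Complex.exp (2 * Complex.I * (θ:ℂ)) * Complex.exp (2 * π * Complex.I / a) ^ j := by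
    intro j
    rw [← Complex.exp_nat_mul, ← Complex.exp_add]
    congr 1
    push_cast
    field_simp
  have hwne : ∀ j : ℕ,
      Complex.exp (2 * Complex.I * (θ:ℂ)) * Complex.exp (2 * π * Complex.I / a) ^ j ≠ 1 := by
    intro j hc
    apply hzan
    have hp : (Complex.exp (2 * Complex.I * (θ:ℂ)) * Complex.exp (2 * π * Complex.I / a) ^ j) ^ a
        = Complex.exp (2 * Complex.I * (θ:ℂ)) ^ a := by
      rw [mul_pow, ← pow_mul, mul_comm j a, pow_mul, zeta_pow_n a ha, one_pow, mul_one]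
    rw [← hp, hc, one_pow]
  have hterm : ∀ j ∈ Finset.range a,
      ((Real.cot (θ + π * j / a) : ℝ) : ℂ)
        = Complex.I + 2 * Complex.I *
            (1 / (Complex.exp (2 * Complex.I * (θ:ℂ))
              * Complex.exp (2 * π * Complex.I / a) ^ j - 1)) := by
    intro j _
    rw [cot_c _ (by rw [hexpj]; exact hwne j), hexpj]
    ring
  rw [Finset.sum_congr rfl hterm, Finset.sum_add_distrib, ← Finset.mul_sum,
    key_sum a _ _ (zeta_pow_ne_one a ha) (zeta_pow_n a ha) hzan,
    Finset.sum_const, Finset.card_range, Complex.ofReal_mul, cot_c _ (by rw [hza]; exact hzan),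
    hza]
  push_cast
  ring

lemma sumC1 (n : ℕ) : ∑ m ∈ Finset.range n, (m:ℂ) = n * (n - 1) / 2 := by
  induction n with
  | zero => simp
  | succ k ih => rw [Finset.sum_range_succ, ih]; push_cast; ring

lemma sumC2 (n : ℕ) : ∑ m ∈ Finset.range n, (m:ℂ)^2 = n * (n - 1) * (2*n - 1) / 6 := by
  induction n with
  | zero => simp
  | succ k ih => rw [Finset.sum_range_succ, ih]; push_cast; ring

lemma geom1 (x : ℂ) (n : ℕ) : (x - 1) * ∑ m ∈ Finset.range n, (m:ℂ) * x ^ m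
    = ((n:ℂ) - 1) * x ^ n + 1 - ∑ m ∈ Finset.range n, x ^ m := by
  induction n with
  | zero => simp
  | succ k ih =>
    rw [Finset.sum_range_succ, Finset.sum_range_succ (f := fun m => x ^ m), mul_add, ih]
    push_cast; ring

lemma geom2 (x : ℂ) (n : ℕ) : (x - 1) * ∑ m ∈ Finset.range n, (m:ℂ)^2 * x ^ m
    = ((n:ℂ) - 1)^2 * x ^ n - 2 * ∑ m ∈ Finset.range n, (m:ℂ) * x ^ m
      + ∑ m ∈ Finset.range n, x ^ m - 1 := by
  induction n with
  | zero => simp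
  | succ k ih =>
    rw [Finset.sum_range_succ, Finset.sum_range_succ (f := fun m => x ^ m),
      Finset.sum_range_succ (f := fun m => (m:ℂ) * x ^ m), mul_add, ih]
    push_cast; ring

lemma inv_a (n : ℕ) (hn : 0 < n) (x : ℂ) (hx : x ≠ 1) (hxn : x ^ n = 1) :
    1 / (x - 1) = (∑ m ∈ Finset.range n, (m:ℂ) * x ^ m) / n := by
  have hG : ∑ m ∈ Finset.range n, x ^ m = 0 := by
    rw [geom_sum_eq hx, hxn, sub_self, zero_div]
  have h1 : (x - 1) * ∑ m ∈ Finset.range n, (m:ℂ) * x ^ m = n := by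
    rw [geom1, hxn, hG]; ring
  have hx1 : x - 1 ≠ 0 := sub_ne_zero.mpr hx
  have hnC : (n:ℂ) ≠ 0 := Nat.cast_ne_zero.mpr hn.ne'
  rw [div_eq_div_iff hx1 hnC]
  linear_combination -h1

lemma inv_b (n : ℕ) (hn : 0 < n) (x : ℂ) (hx : x ≠ 1) (hxn : x ^ n = 1) :
    1 / (x - 1)^2 = (((n:ℂ) - 2) * (∑ m ∈ Finset.range n, (m:ℂ) * x ^ m)
      - ∑ m ∈ Finset.range n, (m:ℂ)^2 * x ^ m) / (2 * n) := by
  have hG : ∑ m ∈ Finset.range n, x ^ m = 0 := by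
    rw [geom_sum_eq hx, hxn, sub_self, zero_div]
  have h1 : (x - 1) * ∑ m ∈ Finset.range n, (m:ℂ) * x ^ m = n := by
    rw [geom1, hxn, hG]; ring
  have h2 : (x - 1) * ∑ m ∈ Finset.range n, (m:ℂ)^2 * x ^ m
      = (n:ℂ)^2 - 2*n - 2 * ∑ m ∈ Finset.range n, (m:ℂ) * x ^ m := by
    rw [geom2, hxn, hG]; ring
  have hx1 : x - 1 ≠ 0 := sub_ne_zero.mpr hx
  have hnC : (n:ℂ) ≠ 0 := Nat.cast_ne_zero.mpr hn.ne'
  rw [div_eq_div_iff (pow_ne_zero 2 hx1) (mul_ne_zero two_ne_zero hnC)]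
  linear_combination -((((n:ℂ) - 2) * (x-1) + 2) * h1 - (x-1) * h2)

lemma sum_pow_Ico (n : ℕ) (hn : 0 < n) (m : ℕ) (hm : m < n) :
    ∑ k ∈ Finset.Ico 1 n, (Complex.exp (2 * π * Complex.I / n) ^ m) ^ k
      = if m = 0 then (n:ℂ) - 1 else -1 := by
  set ζ := Complex.exp (2 * π * Complex.I / n) with hζ
  rcases Nat.eq_zero_or_pos m with h0 | h0
  · simp [h0, Nat.cast_sub hn]
  · rw [if_neg h0.ne']
    have hy : ζ ^ m ≠ 1 := zeta_pow_ne_one n hn m h0 hm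
    have hsum : ∑ k ∈ Finset.range n, (ζ ^ m) ^ k = 0 := by
      rw [geom_sum_eq hy]
      rw [show (ζ ^ m) ^ n = (ζ ^ n) ^ m by rw [← pow_mul, ← pow_mul, mul_comm],
        zeta_pow_n n hn, one_pow, sub_self, zero_div]
    have hsplit : ∑ k ∈ Finset.range n, (ζ ^ m) ^ k
        = (ζ ^ m) ^ 0 + ∑ k ∈ Finset.Ico 1 n, (ζ ^ m) ^ k := by
      rw [Finset.range_eq_Ico, Finset.sum_eq_sum_Ico_succ_bot hn]
    rw [hsplit, pow_zero] at hsum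
    linear_combination hsum

lemma cot_sq_sum (n : ℕ) (hn : 0 < n) :
    ∑ k ∈ Finset.Ico 1 n, (Real.cot (π * k / n))^2 = ((n:ℝ) - 1) * ((n:ℝ) - 2) / 3 := by
  have hnC : (n:ℂ) ≠ 0 := Nat.cast_ne_zero.mpr hn.ne'
  apply Complex.ofReal_inj.mp
  rw [Complex.ofReal_sum]
  simp only [Complex.ofReal_pow]
  set ζ := Complex.exp (2 * π * Complex.I / n) with hζ
  have expand : ∀ u : ℂ, (Complex.I + 2 * Complex.I * u)^2 = -1 - 4*u - 4*u^2 := by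
    intro u
    linear_combination (1 + 4*u + 4*u^2) * Complex.I_sq
  have hterm : ∀ k ∈ Finset.Ico 1 n,
      ((Real.cot (π * k / n) : ℝ) : ℂ)^2
        = -1 - (4/(n:ℂ)) * (∑ m ∈ Finset.range n, (m:ℂ) * (ζ^k) ^ m)
          - (2*((n:ℂ)-2)/(n:ℂ)) * (∑ m ∈ Finset.range n, (m:ℂ) * (ζ^k) ^ m)
          + (2/(n:ℂ)) * (∑ m ∈ Finset.range n, (m:ℂ)^2 * (ζ^k) ^ m) := by
    intro k hk
    simp only [Finset.mem_Ico] at hk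
    have e1 : Complex.exp (2 * Complex.I * ((π * k / n : ℝ) : ℂ)) = ζ ^ k := by
      rw [hζ, ← Complex.exp_nat_mul]
      congr 1
      push_cast
      field_simp
    have e2 : ζ ^ k ≠ 1 := zeta_pow_ne_one n hn k hk.1 hk.2
    have e3 : ζ ^ k - 1 ≠ 0 := sub_ne_zero.mpr e2
    have ha := inv_a n hn (ζ^k) e2 (by rw [← pow_mul, mul_comm, pow_mul, zeta_pow_n n hn, one_pow])
    have hb := inv_b n hn (ζ^k) e2 (by rw [← pow_mul, mul_comm, pow_mul, zeta_pow_n n hn, one_pow])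
    rw [cot_c _ (by rw [e1]; exact e2), e1,
      show 2 * Complex.I / (ζ^k - 1) = 2 * Complex.I * (1/(ζ^k - 1)) by rw [mul_one_div],
      expand, show (1/(ζ^k - 1))^2 = 1/(ζ^k - 1)^2 by rw [div_pow, one_pow], hb, ha]
    field_simp
    ring
  rw [Finset.sum_congr rfl hterm]
  have hF : ∑ k ∈ Finset.Ico 1 n, (∑ m ∈ Finset.range n, (m:ℂ) * (ζ^k) ^ m)
      = -((n:ℂ) * ((n:ℂ)-1) / 2) := by
    rw [Finset.sum_comm]
    have h1 : ∀ m ∈ Finset.range n, ∑ k ∈ Finset.Ico 1 n, (m:ℂ) * (ζ^k) ^ m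
        = -(m:ℂ) := by
      intro m hm
      simp only [Finset.mem_range] at hm
      have h2 : ∀ k ∈ Finset.Ico 1 n, (m:ℂ) * (ζ^k) ^ m = (m:ℂ) * (ζ^m) ^ k := by
        intro k _
        rw [← pow_mul, ← pow_mul, mul_comm k m]
      rw [Finset.sum_congr rfl h2, ← Finset.mul_sum, sum_pow_Ico n hn m hm]
      rcases Nat.eq_zero_or_pos m with h0 | h0
      · simp [h0]
      · rw [if_neg h0.ne']; ring
    rw [Finset.sum_congr rfl h1, Finset.sum_neg_distrib, sumC1]
  have hT : ∑ k ∈ Finset.Ico 1 n, (∑ m ∈ Finset.range n, (m:ℂ)^2 * (ζ^k) ^ m)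
      = -((n:ℂ) * ((n:ℂ)-1) * (2*(n:ℂ)-1) / 6) := by
    rw [Finset.sum_comm]
    have h1 : ∀ m ∈ Finset.range n, ∑ k ∈ Finset.Ico 1 n, (m:ℂ)^2 * (ζ^k) ^ m
        = -((m:ℂ)^2) := by
      intro m hm
      simp only [Finset.mem_range] at hm
      have h2 : ∀ k ∈ Finset.Ico 1 n, (m:ℂ)^2 * (ζ^k) ^ m = (m:ℂ)^2 * (ζ^m) ^ k := by
        intro k _
        rw [← pow_mul, ← pow_mul, mul_comm k m]
      rw [Finset.sum_congr rfl h2, ← Finset.mul_sum, sum_pow_Ico n hn m hm]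
      rcases Nat.eq_zero_or_pos m with h0 | h0
      · simp [h0]
      · rw [if_neg h0.ne']; ring
    rw [Finset.sum_congr rfl h1, Finset.sum_neg_distrib, sumC2]
  simp only [Finset.sum_add_distrib, Finset.sum_sub_distrib, ← Finset.mul_sum,
    Finset.sum_const, Nat.card_Ico, nsmul_eq_mul]
  rw [hF, hT, Nat.cast_sub hn]
  push_cast
  field_simp
  ring

end DedekindAux

/-- The classical Dedekind sum `s(a;b)` defined by the cotangent sum. -/
noncomputable def dedekindS (a : ℤ) (b : ℕ) : ℝ :=
  (1 / (4 * (b : ℝ))) * ∑ ν ∈ Finset.Ico 1 b,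
    Real.cot (Real.pi * a * ν / b) * Real.cot (Real.pi * ν / b)

theorem dedekindS_reciprocity (a b : ℕ) (ha : 0 < a) (hb : 0 < b) (hcop : Nat.gcd a b = 1) :
    dedekindS a b + dedekindS b a =
      -(1 / 4) + ((a : ℝ) ^ 2 + (b : ℝ) ^ 2 + 1) / (12 * a * b) := by
  have hcab : Nat.Coprime a b := hcop
  have haR : (0:ℝ) < a := by exact_mod_cast ha
  have hbR : (0:ℝ) < b := by exact_mod_cast hb
  set S1 := ∑ ν ∈ Finset.Ico 1 b, Real.cot (π * a * ν / b) * Real.cot (π * ν / b) with hS1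
  set S2 := ∑ μ ∈ Finset.Ico 1 a, Real.cot (π * b * μ / a) * Real.cot (π * μ / a) with hS2
  -- divisibility facts
  have hdb : ∀ ν, 0 < ν → ν < b → ¬ (b ∣ a * ν) := by
    intro ν h1 h2 hdvd
    have : b ∣ ν := by
      apply Nat.Coprime.dvd_of_dvd_mul_left hcab.symm
      exact hdvd
    have := Nat.le_of_dvd h1 this
    omega
  have hda : ∀ μ, 0 < μ → μ < a → ¬ (a ∣ b * μ) := by
    intro μ h1 h2 hdvd
    have : a ∣ μ := by
      apply Nat.Coprime.dvd_of_dvd_mul_left hcab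
      exact hdvd
    have := Nat.le_of_dvd h1 this
    omega
  have hdab : ∀ μ ν, 0 < μ → μ < a → 0 < ν → ν < b → ¬ (a * b ∣ μ * b + ν * a) := by
    intro μ ν h1 h2 h3 h4 hdvd
    have hab : a ∣ μ * b := by
      have h5 : a ∣ μ * b + ν * a := dvd_trans (Dvd.intro b rfl) hdvd
      have h6 : a ∣ ν * a := Dvd.intro_left ν rfl
      have h7 := Nat.dvd_sub h5 h6
      simpa using h7
    have h8 : a ∣ μ := Nat.Coprime.dvd_of_dvd_mul_right hcab hab
    have := Nat.le_of_dvd h1 h8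
    omega
  -- sine nonvanishing
  have hsa : ∀ μ ∈ Finset.Ico 1 a, Real.sin (π * μ / a) ≠ 0 := by
    intro μ hμ
    simp only [Finset.mem_Ico] at hμ
    exact sin_ne_zero_of_not_dvd μ a ha (fun hd => by have := Nat.le_of_dvd hμ.1 hd; omega)
  have hsb : ∀ ν ∈ Finset.Ico 1 b, Real.sin (π * ν / b) ≠ 0 := by
    intro ν hν
    simp only [Finset.mem_Ico] at hν
    exact sin_ne_zero_of_not_dvd ν b hb (fun hd => by have := Nat.le_of_dvd hν.1 hd; omega)
  have hsab : ∀ ν ∈ Finset.Ico 1 b, Real.sin ((a:ℝ) * (π * ν / b)) ≠ 0 := by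
    intro ν hν
    simp only [Finset.mem_Ico] at hν
    have e : (a:ℝ) * (π * ν / b) = π * (a * ν : ℕ) / b := by push_cast; ring
    rw [e]
    exact sin_ne_zero_of_not_dvd (a*ν) b hb (hdb ν hν.1 hν.2)
  have hsba : ∀ μ ∈ Finset.Ico 1 a, Real.sin ((b:ℝ) * (π * μ / a)) ≠ 0 := by
    intro μ hμ
    simp only [Finset.mem_Ico] at hμ
    have e : (b:ℝ) * (π * μ / a) = π * (b * μ : ℕ) / a := by push_cast; ring
    rw [e]
    exact sin_ne_zero_of_not_dvd (b*μ) a ha (hda μ hμ.1 hμ.2)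
  have hsxy : ∀ μ ∈ Finset.Ico 1 a, ∀ ν ∈ Finset.Ico 1 b,
      Real.sin (π * μ / a + π * ν / b) ≠ 0 := by
    intro μ hμ ν hν
    simp only [Finset.mem_Ico] at hμ hν
    have e : π * μ / a + π * ν / b = π * (μ * b + ν * a : ℕ) / (a * b : ℕ) := by
      push_cast
      field_simp
    rw [e]
    exact sin_ne_zero_of_not_dvd _ _ (Nat.mul_pos ha hb)
      (hdab μ ν hμ.1 hμ.2 hν.1 hν.2)
  -- inner sums via the multiplication formula
  have hinner_b : ∀ ν ∈ Finset.Ico 1 b, ∑ μ ∈ Finset.Ico 1 a, Real.cot (π * ν / b + π * μ / a)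
      = a * Real.cot (π * a * ν / b) - Real.cot (π * ν / b) := by
    intro ν hν
    have h0 := cot_mul_sum a ha (π * ν / b) (hsab ν hν)
    rw [Finset.range_eq_Ico, Finset.sum_eq_sum_Ico_succ_bot ha] at h0
    have e0 : π * ν / b + π * (0:ℕ) / a = π * ν / b := by push_cast; ring
    have e1 : (a:ℝ) * (π * ν / b) = π * a * ν / b := by ring
    rw [e0, e1] at h0
    linarith [h0]
  have hinner_a : ∀ μ ∈ Finset.Ico 1 a, ∑ ν ∈ Finset.Ico 1 b, Real.cot (π * μ / a + π * ν / b)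
      = b * Real.cot (π * b * μ / a) - Real.cot (π * μ / a) := by
    intro μ hμ
    have h0 := cot_mul_sum b hb (π * μ / a) (hsba μ hμ)
    rw [Finset.range_eq_Ico, Finset.sum_eq_sum_Ico_succ_bot hb] at h0
    have e0 : π * μ / a + π * (0:ℕ) / b = π * μ / a := by push_cast; ring
    have e1 : (b:ℝ) * (π * μ / a) = π * b * μ / a := by ring
    rw [e0, e1] at h0
    linarith [h0]
  -- the three-term double sum
  have hmain : ∑ μ ∈ Finset.Ico 1 a, ∑ ν ∈ Finset.Ico 1 b,
      (Real.cot (π * μ / a) * Real.cot (π * ν / b)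
        - Real.cot (π * μ / a + π * ν / b) * Real.cot (π * μ / a)
        - Real.cot (π * μ / a + π * ν / b) * Real.cot (π * ν / b))
      = ((a:ℝ) - 1) * ((b:ℝ) - 1) := by
    have h1 : ∀ μ ∈ Finset.Ico 1 a, ∀ ν ∈ Finset.Ico 1 b,
        (Real.cot (π * μ / a) * Real.cot (π * ν / b)
          - Real.cot (π * μ / a + π * ν / b) * Real.cot (π * μ / a)
          - Real.cot (π * μ / a + π * ν / b) * Real.cot (π * ν / b)) = 1 := by
      intro μ hμ ν hν
      exact cot_three _ _ (hsa μ hμ) (hsb ν hν) (hsxy μ hμ ν hν)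
    rw [Finset.sum_congr rfl (fun μ hμ => Finset.sum_congr rfl (h1 μ hμ))]
    simp only [Finset.sum_const, Nat.card_Ico, nsmul_eq_mul, mul_one]
    rw [Nat.cast_sub ha, Nat.cast_sub hb]
    push_cast
    ring
  have hprod : ∑ μ ∈ Finset.Ico 1 a, ∑ ν ∈ Finset.Ico 1 b,
      Real.cot (π * μ / a) * Real.cot (π * ν / b) = 0 := by
    rw [← Finset.sum_mul_sum, cot_sum_zero a, zero_mul]
  have hT1 : ∑ μ ∈ Finset.Ico 1 a, ∑ ν ∈ Finset.Ico 1 b,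
      Real.cot (π * μ / a + π * ν / b) * Real.cot (π * μ / a)
      = b * S2 - ∑ μ ∈ Finset.Ico 1 a, (Real.cot (π * μ / a))^2 := by
    have h1 : ∀ μ ∈ Finset.Ico 1 a, ∑ ν ∈ Finset.Ico 1 b,
        Real.cot (π * μ / a + π * ν / b) * Real.cot (π * μ / a)
        = b * (Real.cot (π * b * μ / a) * Real.cot (π * μ / a))
          - (Real.cot (π * μ / a))^2 := by
      intro μ hμ
      rw [← Finset.sum_mul, hinner_a μ hμ]
      ring
    rw [Finset.sum_congr rfl h1, Finset.sum_sub_distrib, ← Finset.mul_sum, hS2]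
  have hT2 : ∑ μ ∈ Finset.Ico 1 a, ∑ ν ∈ Finset.Ico 1 b,
      Real.cot (π * μ / a + π * ν / b) * Real.cot (π * ν / b)
      = a * S1 - ∑ ν ∈ Finset.Ico 1 b, (Real.cot (π * ν / b))^2 := by
    rw [Finset.sum_comm]
    have h1 : ∀ ν ∈ Finset.Ico 1 b, ∑ μ ∈ Finset.Ico 1 a,
        Real.cot (π * μ / a + π * ν / b) * Real.cot (π * ν / b)
        = a * (Real.cot (π * a * ν / b) * Real.cot (π * ν / b))
          - (Real.cot (π * ν / b))^2 := by
      intro ν hν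
      have h2 : ∀ μ ∈ Finset.Ico 1 a,
          Real.cot (π * μ / a + π * ν / b) * Real.cot (π * ν / b)
          = Real.cot (π * ν / b + π * μ / a) * Real.cot (π * ν / b) := by
        intro μ _
        rw [add_comm (π * μ / a)]
      rw [Finset.sum_congr rfl h2, ← Finset.sum_mul, hinner_b ν hν]
      ring
    rw [Finset.sum_congr rfl h1, Finset.sum_sub_distrib, ← Finset.mul_sum, hS1]
  have hexpand : ∑ μ ∈ Finset.Ico 1 a, ∑ ν ∈ Finset.Ico 1 b,
      (Real.cot (π * μ / a) * Real.cot (π * ν / b)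
        - Real.cot (π * μ / a + π * ν / b) * Real.cot (π * μ / a)
        - Real.cot (π * μ / a + π * ν / b) * Real.cot (π * ν / b))
      = (∑ μ ∈ Finset.Ico 1 a, ∑ ν ∈ Finset.Ico 1 b,
          Real.cot (π * μ / a) * Real.cot (π * ν / b))
        - (∑ μ ∈ Finset.Ico 1 a, ∑ ν ∈ Finset.Ico 1 b,
            Real.cot (π * μ / a + π * ν / b) * Real.cot (π * μ / a))
        - (∑ μ ∈ Finset.Ico 1 a, ∑ ν ∈ Finset.Ico 1 b,
            Real.cot (π * μ / a + π * ν / b) * Real.cot (π * ν / b)) := by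
    simp only [Finset.sum_sub_distrib]
  have hCa := cot_sq_sum a ha
  have hCb := cot_sq_sum b hb
  have hkey : (a:ℝ) * S1 + (b:ℝ) * S2
      = ((a:ℝ)-1)*((a:ℝ)-2)/3 + ((b:ℝ)-1)*((b:ℝ)-2)/3 - ((a:ℝ)-1)*((b:ℝ)-1) := by
    rw [hexpand, hprod, hT1, hT2, hCa, hCb] at hmain
    linarith [hmain]
  have hd1 : dedekindS a b = 1/(4*(b:ℝ)) * S1 := by
    rw [dedekindS, hS1]
    push_cast
    ring
  have hd2 : dedekindS b a = 1/(4*(a:ℝ)) * S2 := by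
    rw [dedekindS, hS2]
    push_cast
    ring
  rw [hd1, hd2]
  have ha0 : (a:ℝ) ≠ 0 := haR.ne'
  have hb0 : (b:ℝ) ≠ 0 := hbR.ne'
  field_simp
  linear_combination 12 * hkey
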